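/- Let k ≥ 1, let 0 ≤ m ≤ k, and let ε ∈ {1,−1}. Let M and N be free ℤ-modules of rank k, let S : N × M → ℤ be a ℤ-bilinear perfect pairing, and let p : M → N be a ℤ-linear map satisfying S(p(a), b) = ε·S(p(b), a) for all a, b ∈ M. Let α₁,…,α_k be a ℤ-basis of N such that: (i) for each i with 1 ≤ i ≤ m there is a nonzero integer qᵢ with qᵢ·αᵢ in the image of p; and (ii) every element of the image of p has a nonzero integer multiple lying in the ℤ-span of α₁,…,α_m. Let δ₁,…,δ_k be the basis of M dual to α₁,…,α_k under S, i.e., S(αᵢ, δⱼ) = 1 if i = j and 0 otherwise. Then δⱼ ∈ ker(p) for every j with m < j ≤ k. -/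

import Mathlib

/-- Let `S : N × M → ℤ` be a perfect pairing of free `ℤ`-modules of rank `k`, and let
`p : M → N` satisfy `S(p a, b) = ε · S(p b, a)` with `ε = ±1`. Given a basis `α` of `N`
such that each `αᵢ` (`i < m`) has a nonzero multiple in the image of `p`, and every
element of the image of `p` has a nonzero multiple in the span of `α₁, …, α_m`, the
elements of the dual basis `δ` of `M` beyond index `m` lie in the kernel of `p`. -/
theorem dual_basis_tail_in_kernel (k m : ℕ) (hk : 1 ≤ k) (hm : m ≤ k)
    (ε : ℤ) (hε : ε = 1 ∨ ε = -1)
    (M N : Type) [AddCommGroup M] [Module ℤ M] [AddCommGroup N] [Module ℤ N]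
    (βM : Module.Basis (Fin k) ℤ M)
    (S : N →ₗ[ℤ] M →ₗ[ℤ] ℤ)
    (hS : Function.Bijective S) (hS' : Function.Bijective S.flip)
    (p : M →ₗ[ℤ] N)
    (hsym : ∀ a b : M, S (p a) b = ε * S (p b) a)
    (α : Module.Basis (Fin k) ℤ N)
    (hmult : ∀ i : Fin k, (i : ℕ) < m → ∃ q : ℤ, q ≠ 0 ∧ q • α i ∈ LinearMap.range p)
    (hspan : ∀ x ∈ LinearMap.range p, ∃ q : ℤ, q ≠ 0 ∧
      q • x ∈ Submodule.span ℤ (Set.range fun i : Fin m => α (Fin.castLE hm i)))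
    (δ : Fin k → M)
    (hδ : ∀ i j : Fin k, S (α i) (δ j) = if i = j then 1 else 0) :
    ∀ j : Fin k, m ≤ (j : ℕ) → δ j ∈ LinearMap.ker p := by
  intro j hj
  have key : ∀ a : M, S (p a) (δ j) = 0 := by
    intro a
    obtain ⟨q, hq, hmem⟩ := hspan (p a) (LinearMap.mem_range_self p a)
    have h0 : S (q • p a) (δ j) = 0 := by
      refine Submodule.span_induction ?_ ?_ ?_ ?_ hmem
      · rintro x ⟨i, rfl⟩
        rw [hδ, if_neg]
        intro h
        have h2 : ((Fin.castLE hm i : Fin k) : ℕ) = (j : ℕ) := by rw [h]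
        have h3 : (i : ℕ) < m := i.isLt
        simp only [Fin.coe_castLE] at h2
        omega
      · simp
      · intro x y _ _ hx hy; simp [hx, hy]
      · intro c x _ hx; simp [hx]
    have hq0 : q * S (p a) (δ j) = 0 := by simpa using h0
    rcases mul_eq_zero.mp hq0 with h | h
    · exact absurd h hq
    · exact h
  rw [LinearMap.mem_ker]
  have repr0 : ∀ i : Fin k, α.repr (p (δ j)) i = 0 := by
    intro i
    have hz : S (p (δ j)) (δ i) = 0 := by rw [hsym (δ j) (δ i), key (δ i), mul_zero]
    have hrep : S (p (δ j)) (δ i) = α.repr (p (δ j)) i := by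
      conv_lhs => rw [← α.sum_repr (p (δ j))]
      simp [map_sum, hδ, -Module.Basis.sum_repr]
    rw [← hrep, hz]
  have : α.repr (p (δ j)) = 0 := by
    ext i; exact repr0 i
  simpa using congrArg α.repr.symm this
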